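/- Let p be an odd prime, n ≥ 1 and 1 ≤ α₁ ≤ ⋯ ≤ αₙ integers. Then the homology of the chain complex C̃(α₁)_* ⊗ ⋯ ⊗ C̃(αₙ)_* is generated, as a graded abelian group, by the homology classes of the special cycles whose first Toda index i₁ equals 1. -/

import Mathlib

/-- The underlying module of the tensor product of `n` chain complexes of the form
`C(α)` (resp. of their reduced subcomplexes): the free `ℤ`-module on tuples of degrees,
the tuple `d` corresponding to the basis element `c_{d 0} ⊗ ⋯ ⊗ c_{d (n-1)}`. -/
abbrev TensorC (n : ℕ) : Type := (Fin n → ℕ) →₀ ℤ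

/-- The basis element `c_{d 0} ⊗ ⋯ ⊗ c_{d (n-1)}`. -/
noncomputable def cgen {n : ℕ} (d : Fin n → ℕ) : TensorC n := Finsupp.single d 1

/-- The Koszul sign exponent `d 0 + ⋯ + d (i-1)`. -/
def koszul {n : ℕ} (d : Fin n → ℕ) (i : Fin n) : ℕ :=
  ∑ j ∈ Finset.univ.filter (fun j => j < i), d j

/-- The differential of `C(α 0) ⊗ ⋯ ⊗ C(α (n-1))`: on the `i`-th tensor factor it is
`∂(c_e) = p ^ (α i) · c_{e-1}` for even `e ≥ 2` and `0` otherwise, extended to the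
tensor product by the Leibniz rule with Koszul signs. -/
noncomputable def tensorDiff (p : ℕ) {n : ℕ} (α : Fin n → ℕ) :
    TensorC n →ₗ[ℤ] TensorC n :=
  Finsupp.lift (TensorC n) ℤ (Fin n → ℕ) fun d =>
    ∑ i : Fin n,
      if 2 ≤ d i ∧ Even (d i) then
        ((-1 : ℤ) ^ koszul d i * (p : ℤ) ^ α i) • cgen (Function.update d i (d i - 1))
      else 0

/-- The special cycle associated to the set `S` of Toda slots (the indices `i₁ < ⋯ < i_j`)
and positive integers `M` (giving `m_t` on the Toda slots and `d_u` on the complementary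
slots): the Koszul-signed reordering of
`𝒯(c_{2m₁-1}^{(i₁)}, …, c_{2m_j-1}^{(i_j)}) ⊗ c_{2d₁-1}^{(s₁)} ⊗ ⋯ ⊗ c_{2d_{n-j}-1}^{(s_{n-j})}`
that puts the factor belonging to `C̃(α i)` into the `i`-th position.  The summand of `𝒯`
in which the Toda slot `ℓ ∈ S` carries the odd generator acquires the Koszul sign
`(-1) ^ #{u ∉ S ∣ u < ℓ}` (only odd–odd transpositions contribute), and its
coefficient is `p ^ (α ℓ - α i₁)`; here `i₁ = min S`. -/
noncomputable def specialCycle (p : ℕ) {n : ℕ} (α : Fin n → ℕ) (hn : 0 < n)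
    (S : Finset (Fin n)) (M : Fin n → ℕ) : TensorC n :=
  ∑ ℓ ∈ S,
    ((-1 : ℤ) ^ (Finset.univ.filter (fun u => u < ℓ ∧ u ∉ S)).card *
        (p : ℤ) ^ (α ℓ - α ⟨0, hn⟩)) •
      cgen (Function.update (fun i => if i ∈ S then 2 * M i else 2 * M i - 1) ℓ
        (2 * M ℓ - 1))

lemma tensorDiff_apply (p : ℕ) {n : ℕ} (α : Fin n → ℕ) (z : TensorC n) (e : Fin n → ℕ) :
    tensorDiff p α z e = ∑ i : Fin n,
      if Odd (e i) then
        z (Function.update e i (e i + 1)) *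
          ((-1 : ℤ) ^ koszul (Function.update e i (e i + 1)) i * (p : ℤ) ^ α i)
      else 0 := by
  classical
  rw [tensorDiff, Finsupp.lift_apply, Finsupp.sum_apply]
  rw [Finsupp.sum]
  have step : ∀ d ∈ z.support,
      (z d • (∑ i : Fin n, if 2 ≤ d i ∧ Even (d i) then
        ((-1 : ℤ) ^ koszul d i * (p : ℤ) ^ α i) • cgen (Function.update d i (d i - 1))
      else 0)) e
      = ∑ i : Fin n, z d * (if 2 ≤ d i ∧ Even (d i) then
          ((-1 : ℤ) ^ koszul d i * (p : ℤ) ^ α i) *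
            (if Function.update d i (d i - 1) = e then 1 else 0) else 0) := by
    intro d _
    rw [Finsupp.smul_apply, Finset.sum_apply', smul_eq_mul, Finset.mul_sum]
    refine Finset.sum_congr rfl fun i _ => ?_
    congr 1
    rw [apply_ite (fun (f : TensorC n) => f e)]
    simp only [apply_ite (fun (f : TensorC n) => f e), Finsupp.smul_apply, cgen,
      Finsupp.single_apply, smul_eq_mul, mul_ite, mul_one, mul_zero, Finsupp.zero_apply]
  rw [Finset.sum_congr rfl step, Finset.sum_comm]
  refine Finset.sum_congr rfl fun i _ => ?_
  rw [Finset.sum_eq_single (Function.update e i (e i + 1))]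
  · set d := Function.update e i (e i + 1) with hd
    have hdi : d i = e i + 1 := by simp [hd]
    have hback : Function.update d i (d i - 1) = e := by
      funext j
      rcases eq_or_ne j i with rfl | hj
      · simp [hd]
      · simp [hd, Function.update_apply, hj]
    by_cases ho : Odd (e i)
    · have h2 : 2 ≤ d i ∧ Even (d i) := by
        constructor
        · rw [hdi]; obtain ⟨t, ht⟩ := ho; omega
        · rw [hdi]; exact ho.add_one
      rw [if_pos ho, if_pos h2, if_pos hback, mul_one]
    · have h2 : ¬(2 ≤ d i ∧ Even (d i)) := by
        rw [hdi]
        rintro ⟨-, he⟩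
        exact (Nat.even_add_one.mp he) (Nat.not_odd_iff_even.mp ho)
      rw [if_neg ho, if_neg h2, mul_zero]
  · intro d _ hne
    split_ifs with h1 h2
    · exfalso
      apply hne
      obtain ⟨h1a, -⟩ := h1
      funext j
      have hji := congrFun h2 j
      rcases eq_or_ne j i with rfl | hj
      · simp only [Function.update_self] at hji ⊢
        omega
      · simp only [Function.update_apply, if_neg hj] at hji ⊢
        exact hji
    · simp
    · simp
  · intro hnm
    rw [Finsupp.notMem_support_iff.mp hnm, zero_mul]

/-- `Φ_ℓ e`: decrement slot 0, increment slot ℓ. -/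
def Phi {n : ℕ} (hn : 0 < n) (e : Fin n → ℕ) (ℓ : Fin n) : Fin n → ℕ :=
  Function.update (Function.update e ⟨0, hn⟩ (e ⟨0, hn⟩ - 1)) ℓ (e ℓ + 1)

def Sd {n : ℕ} (hn : 0 < n) (d : Fin n → ℕ) : Finset (Fin n) :=
  insert ⟨0, hn⟩ (Finset.univ.filter fun i => Even (d i))

def Md {n : ℕ} (d : Fin n → ℕ) : Fin n → ℕ := fun i => (d i + 1) / 2

lemma specialCycle_apply (p : ℕ) {n : ℕ} (α : Fin n → ℕ) (hn : 0 < n)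
    (S : Finset (Fin n)) (M : Fin n → ℕ) (e : Fin n → ℕ) :
    specialCycle p α hn S M e = ∑ ℓ ∈ S,
      ((-1 : ℤ) ^ (Finset.univ.filter (fun u => u < ℓ ∧ u ∉ S)).card *
          (p : ℤ) ^ (α ℓ - α ⟨0, hn⟩)) *
        (if Function.update (fun i => if i ∈ S then 2 * M i else 2 * M i - 1) ℓ
            (2 * M ℓ - 1) = e then 1 else 0) := by
  rw [specialCycle, Finset.sum_apply']
  refine Finset.sum_congr rfl fun ℓ _ => ?_
  rw [Finsupp.smul_apply, cgen, Finsupp.single_apply, smul_eq_mul]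

lemma sd_base_eq {n : ℕ} (hn : 0 < n) (d : Fin n → ℕ) (hd0 : Odd (d ⟨0, hn⟩)) :
    Function.update (fun i => if i ∈ Sd hn d then 2 * Md d i else 2 * Md d i - 1)
      ⟨0, hn⟩ (2 * Md d ⟨0, hn⟩ - 1) = d := by
  funext i
  rcases eq_or_ne i ⟨0, hn⟩ with rfl | hi
  · simp only [Function.update_self, Md]
    obtain ⟨t, ht⟩ := hd0
    omega
  · simp only [Function.update_apply, if_neg hi, Md, Sd, Finset.mem_insert,
      Finset.mem_filter, Finset.mem_univ, true_and]
    by_cases he : Even (d i)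
    · rw [if_pos (Or.inr he)]
      obtain ⟨t, ht⟩ := he
      omega
    · rw [if_neg (by tauto)]
      rcases Nat.even_or_odd (d i) with h | h
      · exact absurd h he
      · obtain ⟨t, ht⟩ := h
        omega

lemma spec_apply_odd (p : ℕ) {n : ℕ} (α : Fin n → ℕ) (hn : 0 < n)
    (d e : Fin n → ℕ) (hd0 : Odd (d ⟨0, hn⟩)) (he0 : Odd (e ⟨0, hn⟩)) :
    specialCycle p α hn (Sd hn d) (Md d) e = if d = e then 1 else 0 := by
  rw [specialCycle_apply]
  have h0mem : (⟨0, hn⟩ : Fin n) ∈ Sd hn d := Finset.mem_insert_self _ _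
  refine Eq.trans (Finset.sum_eq_single_of_mem _ h0mem ?_) ?_
  swap
  · have hfilt : (Finset.univ.filter
        (fun u => u < (⟨0, hn⟩ : Fin n) ∧ u ∉ Sd hn d)).card = 0 := by
      rw [Finset.card_eq_zero, Finset.filter_eq_empty_iff]
      intro u _
      simp only [not_and]
      intro hu
      exact absurd hu (by simp [Fin.lt_def])
    rw [hfilt, pow_zero, Nat.sub_self, pow_zero, mul_one, one_mul, sd_base_eq hn d hd0]
  · intro ℓ hℓ hℓ0
    have : Function.update (fun i => if i ∈ Sd hn d then 2 * Md d i else 2 * Md d i - 1)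
        ℓ (2 * Md d ℓ - 1) ≠ e := by
      intro hcontra
      have := congrFun hcontra ⟨0, hn⟩
      rw [Function.update_apply, if_neg (Ne.symm hℓ0)] at this
      rw [if_pos h0mem] at this
      rw [← this] at he0
      simp [Nat.odd_iff, Nat.mul_mod_right] at he0
    rw [if_neg this, mul_zero]

lemma spec_apply_even (p : ℕ) {n : ℕ} (α : Fin n → ℕ) (hn : 0 < n)
    (d e : Fin n → ℕ) (hd0 : Odd (d ⟨0, hn⟩)) (hd1 : ∀ i, 1 ≤ d i)
    (he0 : Even (e ⟨0, hn⟩)) :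
    specialCycle p α hn (Sd hn d) (Md d) e = ∑ ℓ : Fin n,
      if ℓ ≠ ⟨0, hn⟩ ∧ Odd (e ℓ) ∧ d = Phi hn e ℓ then
        ((-1 : ℤ) ^ (Finset.univ.filter
            (fun u => u < ℓ ∧ u ≠ ⟨0, hn⟩ ∧ Odd (e u))).card *
          (p : ℤ) ^ (α ℓ - α ⟨0, hn⟩))
      else 0 := by
  classical
  have h0mem : (⟨0, hn⟩ : Fin n) ∈ Sd hn d := Finset.mem_insert_self _ _
  have hbase : ∀ i, i ≠ (⟨0, hn⟩ : Fin n) →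
      (if i ∈ Sd hn d then 2 * Md d i else 2 * Md d i - 1) = d i := by
    intro i hi
    have := congrFun (sd_base_eq hn d hd0) i
    rwa [Function.update_apply, if_neg hi] at this
  have hMd0 : 2 * Md d ⟨0, hn⟩ = d ⟨0, hn⟩ + 1 := by
    obtain ⟨t, ht⟩ := hd0
    simp only [Md]
    omega
  have hmemiff : ∀ ℓ, ℓ ≠ (⟨0, hn⟩ : Fin n) → (ℓ ∈ Sd hn d ↔ Even (d ℓ)) := by
    intro ℓ hℓ
    simp [Sd, hℓ]
  rw [specialCycle_apply]
  rw [show (∑ ℓ ∈ Sd hn d,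
      ((-1 : ℤ) ^ (Finset.univ.filter (fun u => u < ℓ ∧ u ∉ Sd hn d)).card *
          (p : ℤ) ^ (α ℓ - α ⟨0, hn⟩)) *
        (if Function.update
              (fun i => if i ∈ Sd hn d then 2 * Md d i else 2 * Md d i - 1) ℓ
            (2 * Md d ℓ - 1) = e then 1 else 0)) = ∑ ℓ : Fin n,
      if ℓ ∈ Sd hn d then
        ((-1 : ℤ) ^ (Finset.univ.filter (fun u => u < ℓ ∧ u ∉ Sd hn d)).card *
            (p : ℤ) ^ (α ℓ - α ⟨0, hn⟩)) *
          (if Function.update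
                (fun i => if i ∈ Sd hn d then 2 * Md d i else 2 * Md d i - 1) ℓ
              (2 * Md d ℓ - 1) = e then 1 else 0)
      else 0 from by rw [Finset.sum_ite_mem, Finset.univ_inter]]
  refine Finset.sum_congr rfl fun ℓ _ => ?_
  by_cases hcond : ℓ ≠ (⟨0, hn⟩ : Fin n) ∧ Odd (e ℓ) ∧ d = Phi hn e ℓ
  · obtain ⟨hl0, hoe, hde⟩ := hcond
    have hdl : d ℓ = e ℓ + 1 := by
      rw [hde]; simp [Phi]
    have hmem : ℓ ∈ Sd hn d := by
      rw [hmemiff ℓ hl0, hdl]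
      exact hoe.add_one
    have hdz0 : d ⟨0, hn⟩ = e ⟨0, hn⟩ - 1 := by
      rw [hde]
      simp [Phi, Function.update_apply, hl0, Ne.symm hl0]
    have hez0 : 1 ≤ e ⟨0, hn⟩ := by
      have := hd1 ⟨0, hn⟩
      omega
    have hge : Function.update
        (fun i => if i ∈ Sd hn d then 2 * Md d i else 2 * Md d i - 1) ℓ
        (2 * Md d ℓ - 1) = e := by
      funext i
      rcases eq_or_ne i ℓ with rfl | hil
      · simp only [Function.update_self, Md, hdl]
        obtain ⟨t, ht⟩ := hoe
        omega
      · rw [Function.update_apply, if_neg hil]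
        rcases eq_or_ne i ⟨0, hn⟩ with rfl | hi0
        · rw [if_pos h0mem, hMd0, hdz0]
          omega
        · rw [hbase i hi0]
          rw [hde]
          simp [Phi, Function.update_apply, hil, hi0]
    have hcard : (Finset.univ.filter (fun u => u < ℓ ∧ u ∉ Sd hn d)).card =
        (Finset.univ.filter (fun u => u < ℓ ∧ u ≠ (⟨0, hn⟩ : Fin n) ∧ Odd (e u))).card := by
      congr 1
      apply Finset.filter_congr
      intro u _
      constructor
      · rintro ⟨hu1, hu2⟩
        have hu0 : u ≠ (⟨0, hn⟩ : Fin n) := fun h => hu2 (h ▸ h0mem)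
        refine ⟨hu1, hu0, ?_⟩
        have : ¬ Even (d u) := fun h => hu2 ((hmemiff u hu0).mpr h)
        have hdu : d u = e u := by
          rw [hde]
          simp [Phi, Function.update_apply, hu0, ne_of_lt hu1]
        rw [← hdu]
        exact Nat.not_even_iff_odd.mp this
      · rintro ⟨hu1, hu0, hu2⟩
        refine ⟨hu1, ?_⟩
        have hdu : d u = e u := by
          rw [hde]
          simp [Phi, Function.update_apply, hu0, ne_of_lt hu1]
        intro hmem'
        have := (hmemiff u hu0).mp hmem'
        rw [hdu] at this
        exact (Nat.not_odd_iff_even.mpr this) hu2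
    rw [if_pos hmem, if_pos hge, if_pos ⟨hl0, hoe, hde⟩, hcard, mul_one]
  · rw [if_neg hcond]
    by_cases hmem : ℓ ∈ Sd hn d
    · rw [if_pos hmem]
      have hne : Function.update
          (fun i => if i ∈ Sd hn d then 2 * Md d i else 2 * Md d i - 1) ℓ
          (2 * Md d ℓ - 1) ≠ e := by
        intro hge
        apply hcond
        rcases eq_or_ne ℓ ⟨0, hn⟩ with rfl | hl0
        · exfalso
          rw [sd_base_eq hn d hd0] at hge
          rw [← hge] at he0
          exact (Nat.not_odd_iff_even.mpr he0) hd0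
        · have hdl : Even (d ℓ) := (hmemiff ℓ hl0).mp hmem
          have hMdl : 2 * Md d ℓ = d ℓ := by
            obtain ⟨t, ht⟩ := hdl
            simp only [Md]
            omega
          have hel : e ℓ = d ℓ - 1 := by
            have := congrFun hge ℓ
            rw [Function.update_self, hMdl] at this
            omega
          have hdl1 := hd1 ℓ
          have hoe : Odd (e ℓ) := by
            rw [Nat.odd_iff]
            obtain ⟨t, ht⟩ := hdl
            omega
          have hez : e ⟨0, hn⟩ = d ⟨0, hn⟩ + 1 := by
            have := congrFun hge ⟨0, hn⟩
            rw [Function.update_apply, if_neg (Ne.symm hl0), if_pos h0mem, hMd0] at this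
            omega
          refine ⟨hl0, hoe, ?_⟩
          funext i
          rcases eq_or_ne i ℓ with rfl | hil
          · simp only [Phi, Function.update_self]
            obtain ⟨t, ht⟩ := hdl
            omega
          · rcases eq_or_ne i ⟨0, hn⟩ with rfl | hi0
            · have hphi : Phi hn e ℓ ⟨0, hn⟩ = e ⟨0, hn⟩ - 1 := by
                simp [Phi, Function.update_apply, hil]
              rw [hphi, hez]
              omega
            · have := congrFun hge i
              rw [Function.update_apply, if_neg hil, hbase i hi0] at this
              simp only [Phi, Function.update_apply, if_neg hil, if_neg hi0]
              omega
      rw [if_neg hne, mul_zero]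
    · rw [if_neg hmem]

lemma sign_eq {n : ℕ} (hn : 0 < n) (e : Fin n → ℕ) (ℓ : Fin n) (hl0 : ℓ ≠ ⟨0, hn⟩)
    (he0 : Even (e ⟨0, hn⟩)) (he1 : 1 ≤ e ⟨0, hn⟩) :
    ((-1 : ℤ) ^ (Finset.univ.filter
        (fun u => u < ℓ ∧ u ≠ ⟨0, hn⟩ ∧ Odd (e u))).card)
      = -((-1 : ℤ) ^ koszul (Phi hn e ℓ) ℓ) := by
  classical
  set z0 : Fin n := ⟨0, hn⟩ with hz0
  set F := Finset.univ.filter (fun u : Fin n => u < ℓ) with hF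
  have hF0 : z0 ∈ F := by
    simp only [hF, Finset.mem_filter, Finset.mem_univ, true_and]
    rw [Fin.lt_def]
    have : ℓ.val ≠ 0 := fun h => hl0 (Fin.ext h)
    simp only [hz0]
    omega
  have hLHS : (Finset.univ.filter (fun u => u < ℓ ∧ u ≠ z0 ∧ Odd (e u))) =
      F.filter (fun u => u ≠ z0 ∧ Odd (e u)) := by
    rw [hF, Finset.filter_filter]
  rw [hLHS]
  have h1 : ((-1 : ℤ) ^ (F.filter fun u => u ≠ z0 ∧ Odd (e u)).card) =
      ∏ u ∈ F, if u ≠ z0 ∧ Odd (e u) then (-1 : ℤ) else 1 := by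
    rw [← Finset.prod_const, Finset.prod_filter]
  have h2 : ((-1 : ℤ) ^ koszul (Phi hn e ℓ) ℓ) =
      ∏ u ∈ F, (-1 : ℤ) ^ (Phi hn e ℓ u) := by
    rw [koszul, Finset.prod_pow_eq_pow_sum]
  rw [h1, h2]
  rw [← Finset.mul_prod_erase F _ hF0, ← Finset.mul_prod_erase F _ hF0]
  have hq0 : (if z0 ≠ z0 ∧ Odd (e z0) then (-1 : ℤ) else 1) = 1 := by simp
  have hp0 : (-1 : ℤ) ^ (Phi hn e ℓ z0) = -1 := by
    have hphi : Phi hn e ℓ z0 = e z0 - 1 := by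
      simp [Phi, Function.update_apply, Ne.symm hl0, ← hz0]
    rw [hphi]
    apply Odd.neg_one_pow
    rw [Nat.odd_iff]
    obtain ⟨t, ht⟩ := he0
    omega
  rw [hq0, hp0, one_mul]
  have hterm : ∀ u ∈ F.erase z0,
      (if u ≠ z0 ∧ Odd (e u) then (-1 : ℤ) else 1) = (-1 : ℤ) ^ (e u) := by
    intro u hu
    obtain ⟨hu0, huF⟩ := Finset.mem_erase.mp hu
    rcases Nat.even_or_odd (e u) with h | h
    · rw [if_neg (fun hc => (Nat.not_odd_iff_even.mpr h) hc.2), h.neg_one_pow]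
    · rw [if_pos ⟨hu0, h⟩, h.neg_one_pow]
  have hterm2 : ∀ u ∈ F.erase z0,
      ((-1 : ℤ) ^ (Phi hn e ℓ u)) = (-1 : ℤ) ^ (e u) := by
    intro u hu
    obtain ⟨hu0, huF⟩ := Finset.mem_erase.mp hu
    have hul : u ≠ ℓ := by
      rw [hF, Finset.mem_filter] at huF
      exact ne_of_lt huF.2
    have : Phi hn e ℓ u = e u := by
      simp [Phi, Function.update_apply, hul, hu0, ← hz0]
    rw [this]
  rw [Finset.prod_congr rfl hterm, Finset.prod_congr rfl hterm2]
  ring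

/-- The homology of `C̃(α₁) ⊗ ⋯ ⊗ C̃(αₙ)` is generated by the classes of the special
cycles with first Toda index `i₁ = 1`: every cycle `z` of the reduced tensor complex
(i.e. supported on tuples with all degrees `≥ 1` and with `∂ z = 0`) differs from an
element of the `ℤ`-span of such special cycles by the boundary of an element of the
reduced complex. -/
theorem stmt1 (p : ℕ) (hp : p.Prime) (hodd : Odd p) (n : ℕ) (hn : 0 < n)
    (α : Fin n → ℕ) (hα0 : 1 ≤ α ⟨0, hn⟩) (hα : Monotone α)
    (z : TensorC n) (hzred : ∀ d ∈ z.support, ∀ i, 1 ≤ d i)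
    (hzcyc : tensorDiff p α z = 0) :
    ∃ s ∈ Submodule.span ℤ {x : TensorC n |
        ∃ (S : Finset (Fin n)) (M : Fin n → ℕ),
          (⟨0, hn⟩ : Fin n) ∈ S ∧ (∀ i, 1 ≤ M i) ∧ x = specialCycle p α hn S M},
      ∃ w : TensorC n, (∀ d ∈ w.support, ∀ i, 1 ≤ d i) ∧ z = s + tensorDiff p α w := by
  classical
  set T := z.support.filter (fun d => Odd (d (⟨0, hn⟩ : Fin n))) with hT
  have hTd : ∀ d ∈ T, (Odd (d (⟨0, hn⟩ : Fin n)) ∧ ∀ i, 1 ≤ d i) := by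
    intro d hd
    rw [hT, Finset.mem_filter] at hd
    exact ⟨hd.2, hzred d hd.1⟩
  refine ⟨∑ d ∈ T, z d • specialCycle p α hn (Sd hn d) (Md d), ?_, 0, by simp, ?_⟩
  · refine Submodule.sum_mem _ fun d hd => Submodule.smul_mem _ _ (Submodule.subset_span ?_)
    refine ⟨Sd hn d, Md d, Finset.mem_insert_self _ _, fun i => ?_, rfl⟩
    have := (hTd d hd).2 i
    simp only [Md]
    omega
  · rw [map_zero, add_zero]
    ext e
    rw [Finset.sum_apply']
    have hsmul : ∀ d ∈ T, (z d • specialCycle p α hn (Sd hn d) (Md d)) e =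
        z d * specialCycle p α hn (Sd hn d) (Md d) e := fun d _ => by
      rw [Finsupp.smul_apply, smul_eq_mul]
    rcases Nat.even_or_odd (e (⟨0, hn⟩ : Fin n)) with heB | heA
    · -- Even case
      have hstep : ∀ d ∈ T, (z d • specialCycle p α hn (Sd hn d) (Md d)) e =
          ∑ ℓ : Fin n, if ℓ ≠ (⟨0, hn⟩ : Fin n) ∧ Odd (e ℓ) ∧ d = Phi hn e ℓ then
            z d * ((-1 : ℤ) ^ (Finset.univ.filter
                (fun u => u < ℓ ∧ u ≠ (⟨0, hn⟩ : Fin n) ∧ Odd (e u))).card *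
              (p : ℤ) ^ (α ℓ - α ⟨0, hn⟩)) else 0 := by
        intro d hd
        rw [hsmul d hd, spec_apply_even p α hn d e (hTd d hd).1 (hTd d hd).2 heB,
            Finset.mul_sum]
        exact Finset.sum_congr rfl fun ℓ _ => by rw [mul_ite, mul_zero]
      rw [Finset.sum_congr rfl hstep, Finset.sum_comm]
      have hmain : ∀ ℓ : Fin n,
          (∑ d ∈ T, if ℓ ≠ (⟨0, hn⟩ : Fin n) ∧ Odd (e ℓ) ∧ d = Phi hn e ℓ then
            z d * ((-1 : ℤ) ^ (Finset.univ.filter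
                (fun u => u < ℓ ∧ u ≠ (⟨0, hn⟩ : Fin n) ∧ Odd (e u))).card *
              (p : ℤ) ^ (α ℓ - α ⟨0, hn⟩)) else 0)
          = if ℓ ≠ (⟨0, hn⟩ : Fin n) ∧ Odd (e ℓ) then
            z (Phi hn e ℓ) * ((-1 : ℤ) ^ (Finset.univ.filter
                (fun u => u < ℓ ∧ u ≠ (⟨0, hn⟩ : Fin n) ∧ Odd (e u))).card *
              (p : ℤ) ^ (α ℓ - α ⟨0, hn⟩)) else 0 := by
        intro ℓ
        by_cases hP : ℓ ≠ (⟨0, hn⟩ : Fin n) ∧ Odd (e ℓ)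
        · rw [if_pos hP]
          have hc : ∀ d ∈ T, (if ℓ ≠ (⟨0, hn⟩ : Fin n) ∧ Odd (e ℓ) ∧ d = Phi hn e ℓ then
              z d * ((-1 : ℤ) ^ (Finset.univ.filter
                  (fun u => u < ℓ ∧ u ≠ (⟨0, hn⟩ : Fin n) ∧ Odd (e u))).card *
                (p : ℤ) ^ (α ℓ - α ⟨0, hn⟩)) else 0)
              = if d = Phi hn e ℓ then
              z d * ((-1 : ℤ) ^ (Finset.univ.filter
                  (fun u => u < ℓ ∧ u ≠ (⟨0, hn⟩ : Fin n) ∧ Odd (e u))).card *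
                (p : ℤ) ^ (α ℓ - α ⟨0, hn⟩)) else 0 := by
            intro d _
            refine if_congr ?_ rfl rfl
            exact ⟨fun h => h.2.2, fun h => ⟨hP.1, hP.2, h⟩⟩
          rw [Finset.sum_congr rfl hc, Finset.sum_ite_eq' T (Phi hn e ℓ)]
          by_cases hmem : Phi hn e ℓ ∈ T
          · rw [if_pos hmem]
          · rw [if_neg hmem]
            have hz0 : z (Phi hn e ℓ) = 0 := by
              rw [← Finsupp.notMem_support_iff]
              intro hsupp
              apply hmem
              rw [hT, Finset.mem_filter]
              refine ⟨hsupp, ?_⟩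
              have h1 : 1 ≤ Phi hn e ℓ ⟨0, hn⟩ := hzred _ hsupp _
              have hphi : Phi hn e ℓ ⟨0, hn⟩ = e ⟨0, hn⟩ - 1 := by
                simp [Phi, Function.update_apply, hP.1, Ne.symm hP.1]
              rw [hphi] at h1 ⊢
              rw [Nat.odd_iff]
              obtain ⟨t, ht⟩ := heB
              omega
            rw [hz0, zero_mul]
        · rw [if_neg hP]
          refine Finset.sum_eq_zero fun d _ => ?_
          rw [if_neg (fun hc => hP ⟨hc.1, hc.2.1⟩)]
      rw [Finset.sum_congr rfl (fun ℓ _ => hmain ℓ)]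
      -- now goal : z e = ∑ ℓ, ite (ℓ ≠ 0 ∧ Odd (e ℓ)) (z (Phi) * c) 0
      by_cases he1 : 1 ≤ e (⟨0, hn⟩ : Fin n)
      · -- use the cycle condition
        have he2 : 2 ≤ e (⟨0, hn⟩ : Fin n) := by
          obtain ⟨t, ht⟩ := heB
          omega
        set e' := Function.update e (⟨0, hn⟩ : Fin n) (e (⟨0, hn⟩ : Fin n) - 1) with he'
        have hz' : tensorDiff p α z e' = 0 := by rw [hzcyc]; rfl
        rw [tensorDiff_apply] at hz'
        rw [← Finset.add_sum_erase _ _ (Finset.mem_univ (⟨0, hn⟩ : Fin n))] at hz'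
        have he'0 : e' (⟨0, hn⟩ : Fin n) = e (⟨0, hn⟩ : Fin n) - 1 := by
          rw [he', Function.update_self]
        have hodd0 : Odd (e' (⟨0, hn⟩ : Fin n)) := by
          rw [he'0, Nat.odd_iff]
          obtain ⟨t, ht⟩ := heB
          omega
        have hup0 : Function.update e' (⟨0, hn⟩ : Fin n)
            (e' (⟨0, hn⟩ : Fin n) + 1) = e := by
          funext i
          rcases eq_or_ne i (⟨0, hn⟩ : Fin n) with rfl | hi
          · rw [Function.update_self, he'0]
            omega
          · rw [Function.update_apply, if_neg hi, he', Function.update_apply, if_neg hi]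
        have hkz0 : koszul e (⟨0, hn⟩ : Fin n) = 0 := by
          rw [koszul]
          apply Finset.sum_eq_zero
          intro u hu
          rw [Finset.mem_filter] at hu
          exact absurd hu.2 (by simp [Fin.lt_def])
        rw [if_pos hodd0, hup0, hkz0, pow_zero, one_mul] at hz'
        have hterm : ∀ i ∈ Finset.univ.erase (⟨0, hn⟩ : Fin n),
            (if Odd (e' i) then
              z (Function.update e' i (e' i + 1)) *
                ((-1 : ℤ) ^ koszul (Function.update e' i (e' i + 1)) i * (p : ℤ) ^ α i)
            else 0)
            = -(if i ≠ (⟨0, hn⟩ : Fin n) ∧ Odd (e i) then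
              z (Phi hn e i) * ((-1 : ℤ) ^ (Finset.univ.filter
                  (fun u => u < i ∧ u ≠ (⟨0, hn⟩ : Fin n) ∧ Odd (e u))).card *
                (p : ℤ) ^ (α i - α ⟨0, hn⟩)) else 0) * (p : ℤ) ^ (α ⟨0, hn⟩) := by
          intro i hi
          have hi0 : i ≠ (⟨0, hn⟩ : Fin n) := (Finset.mem_erase.mp hi).1
          have he'i : e' i = e i := by
            rw [he', Function.update_apply, if_neg hi0]
          have hupi : Function.update e' i (e i + 1) = Phi hn e i := by
            simp only [Phi, ← he']
          rw [he'i, hupi]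
          by_cases ho : Odd (e i)
          · rw [if_pos ho, if_pos ⟨hi0, ho⟩]
            rw [sign_eq hn e i hi0 heB he1]
            have hαle : α ⟨0, hn⟩ ≤ α i := hα (by rw [Fin.le_def]; exact Nat.zero_le _)
            have hppow : ((p : ℤ) ^ (α i - α ⟨0, hn⟩)) * (p : ℤ) ^ (α ⟨0, hn⟩) =
                (p : ℤ) ^ (α i) := by
              rw [← pow_add, Nat.sub_add_cancel hαle]
            ring_nf
            rw [← hppow]
            ring
          · rw [if_neg ho, if_neg (fun hc => ho hc.2), neg_zero, zero_mul]
        rw [Finset.sum_congr rfl hterm] at hz'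
        rw [← Finset.sum_mul, Finset.sum_neg_distrib, neg_mul] at hz'
        have hcancel : z e * (p : ℤ) ^ (α ⟨0, hn⟩) =
            (∑ ℓ : Fin n, if ℓ ≠ (⟨0, hn⟩ : Fin n) ∧ Odd (e ℓ) then
              z (Phi hn e ℓ) * ((-1 : ℤ) ^ (Finset.univ.filter
                  (fun u => u < ℓ ∧ u ≠ (⟨0, hn⟩ : Fin n) ∧ Odd (e u))).card *
                (p : ℤ) ^ (α ℓ - α ⟨0, hn⟩)) else 0) * (p : ℤ) ^ (α ⟨0, hn⟩) := by
          have hsplit : (∑ ℓ : Fin n, if ℓ ≠ (⟨0, hn⟩ : Fin n) ∧ Odd (e ℓ) then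
              z (Phi hn e ℓ) * ((-1 : ℤ) ^ (Finset.univ.filter
                  (fun u => u < ℓ ∧ u ≠ (⟨0, hn⟩ : Fin n) ∧ Odd (e u))).card *
                (p : ℤ) ^ (α ℓ - α ⟨0, hn⟩)) else 0)
              = ∑ ℓ ∈ Finset.univ.erase (⟨0, hn⟩ : Fin n),
                if ℓ ≠ (⟨0, hn⟩ : Fin n) ∧ Odd (e ℓ) then
              z (Phi hn e ℓ) * ((-1 : ℤ) ^ (Finset.univ.filter
                  (fun u => u < ℓ ∧ u ≠ (⟨0, hn⟩ : Fin n) ∧ Odd (e u))).card *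
                (p : ℤ) ^ (α ℓ - α ⟨0, hn⟩)) else 0 := by
            rw [← Finset.add_sum_erase _ _ (Finset.mem_univ (⟨0, hn⟩ : Fin n))]
            simp
          rw [hsplit]
          linarith [hz']
        have hpne : ((p : ℤ) ^ (α ⟨0, hn⟩)) ≠ 0 :=
          pow_ne_zero _ (Int.natCast_ne_zero.mpr hp.ne_zero)
        exact mul_right_cancel₀ hpne hcancel
      · -- e 0 = 0 : everything vanishes
        have hez : e (⟨0, hn⟩ : Fin n) = 0 := by omega
        have hze : z e = 0 := by
          rw [← Finsupp.notMem_support_iff]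
          intro hsupp
          have := hzred e hsupp ⟨0, hn⟩
          omega
        rw [hze]
        symm
        refine Finset.sum_eq_zero fun ℓ _ => ?_
        by_cases hP : ℓ ≠ (⟨0, hn⟩ : Fin n) ∧ Odd (e ℓ)
        · rw [if_pos hP]
          have hz0 : z (Phi hn e ℓ) = 0 := by
            rw [← Finsupp.notMem_support_iff]
            intro hsupp
            have h1 := hzred _ hsupp ⟨0, hn⟩
            have hphi : Phi hn e ℓ ⟨0, hn⟩ = e ⟨0, hn⟩ - 1 := by
              simp [Phi, Function.update_apply, hP.1, Ne.symm hP.1]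
            rw [hphi, hez] at h1
            omega
          rw [hz0, zero_mul]
        · rw [if_neg hP]
    · -- Odd case
      have hstep : ∀ d ∈ T, (z d • specialCycle p α hn (Sd hn d) (Md d)) e =
          if d = e then z d else 0 := by
        intro d hd
        rw [hsmul d hd, spec_apply_odd p α hn d e (hTd d hd).1 heA, mul_ite, mul_one, mul_zero]
      rw [Finset.sum_congr rfl hstep, Finset.sum_ite_eq' T e]
      by_cases heT : e ∈ T
      · rw [if_pos heT]
      · rw [if_neg heT]
        rw [← Finsupp.notMem_support_iff]
        intro hsupp
        exact heT (by rw [hT, Finset.mem_filter]; exact ⟨hsupp, heA⟩)
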